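/- Let T be a finite 3-coloured tournament in which every vertex is incident with edges of at most two of the three colours. Then T contains either a set of three vertices spanning a T_3, or a single vertex that monochromatically dominates every other vertex of T. -/

import Mathlib

/-- A 3-coloured tournament on vertex type `V`: between any two distinct
vertices there is exactly one directed edge (`beats`), and `colour x y` gives
the colour (one of three: red, blue, green) of the edge from `x` to `y`
(meaningful when `beats x y` holds). -/
structure CTournament (V : Type*) where
  beats : V → V → Prop
  irrefl : ∀ v, ¬ beats v v
  asymm : ∀ v w, beats v w → ¬ beats w v
  total : ∀ v w, v ≠ w → beats v w ∨ beats w v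
  colour : V → V → Fin 3

namespace CTournament

/-- The colour red. -/
def red : Fin 3 := 0
/-- The colour blue. -/
def blue : Fin 3 := 1
/-- The colour green. -/
def green : Fin 3 := 2

variable {V : Type*} (T : CTournament V)

/-- `x` monochromatically dominates `y` in colour `c`: there is a directed
path (with at least one edge) from `x` to `y` all of whose edges have
colour `c`. -/
def Dom (c : Fin 3) (x y : V) : Prop :=
  Relation.TransGen (fun a b => T.beats a b ∧ T.colour a b = c) x y

/-- `x` monochromatically dominates `y` (in some colour). -/
def MDom (x y : V) : Prop := ∃ c, T.Dom c x y

/-- `x` monochromatically dominates `y` in colour `c` within the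
subtournament induced on the vertex set `S`. -/
def DomIn (S : Set V) (c : Fin 3) (x y : V) : Prop :=
  Relation.TransGen (fun a b => a ∈ S ∧ b ∈ S ∧ T.beats a b ∧ T.colour a b = c) x y

/-- `x` monochromatically dominates `y` within the subtournament induced on `S`. -/
def MDomIn (S : Set V) (x y : V) : Prop := ∃ c, T.DomIn S c x y

/-- `T` contains a `T_3`: three vertices spanning a cyclic triangle whose
three edges have three pairwise distinct colours. -/
def HasT3 : Prop :=
  ∃ a b c : V, T.beats a b ∧ T.beats b c ∧ T.beats c a ∧
    T.colour a b ≠ T.colour b c ∧ T.colour b c ≠ T.colour c a ∧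
    T.colour a b ≠ T.colour c a

/-- Vertex `v` is incident with an edge of colour `c`. -/
def IncidentColour (v : V) (c : Fin 3) : Prop :=
  ∃ w, (T.beats v w ∧ T.colour v w = c) ∨ (T.beats w v ∧ T.colour w v = c)

/-- `T` is a minimal counterexample: it contains no `T_3`, no vertex
monochromatically dominates every other vertex, and every proper nonempty
subset of the vertices spans a subtournament containing a vertex that
monochromatically dominates (within that subtournament) every other vertex
of the subset. -/
def MinimalCex : Prop :=
  ¬ T.HasT3 ∧
  (¬ ∃ x : V, ∀ y, y ≠ x → T.MDom x y) ∧
  ∀ S : Set V, S.Nonempty → S ≠ Set.univ →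
    ∃ x ∈ S, ∀ y ∈ S, y ≠ x → T.MDomIn S x y

/-- The permutation `σ` (sending every vertex to its successor) is a directed
Hamilton cycle of `T`: every vertex beats its successor, and all vertices lie
on a single cycle of `σ`. -/
def IsHamCycle (σ : Equiv.Perm V) : Prop :=
  (∀ v, T.beats v (σ v)) ∧ ∀ v w : V, ∃ n : ℕ, (⇑σ)^[n] v = w

/-- The domination property of the Hamilton cycle `σ`: every vertex
monochromatically dominates every vertex other than itself and its
predecessor on the cycle, and no vertex monochromatically dominates its
predecessor. -/
def HamDomProp (σ : Equiv.Perm V) : Prop :=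
  (∀ x y : V, y ≠ x → y ≠ σ.symm x → T.MDom x y) ∧
  ∀ x : V, ¬ T.MDom x (σ.symm x)

/-- The vertex set of the directed subpath `xCy` of the Hamilton cycle whose
successor permutation is `σ`: all vertices reachable from `x` along the cycle
no later than the first visit of `y`. -/
def PathSet (σ : Equiv.Perm V) (x y : V) : Set V :=
  {z | ∃ k : ℕ, (⇑σ)^[k] x = z ∧ ∀ j < k, (⇑σ)^[j] x ≠ y}

/-- `R^+(x)`: the vertices to which `x` sends a red edge. -/
def Rplus (x : V) : Set V := {v | T.beats x v ∧ T.colour x v = red}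
/-- `R^-(x)`: the vertices from which `x` receives a red edge. -/
def Rminus (x : V) : Set V := {v | T.beats v x ∧ T.colour v x = red}
/-- `B^+(x)`: the vertices to which `x` sends a blue edge. -/
def Bplus (x : V) : Set V := {v | T.beats x v ∧ T.colour x v = blue}
/-- `B^-(x)`: the vertices from which `x` receives a blue edge. -/
def Bminus (x : V) : Set V := {v | T.beats v x ∧ T.colour v x = blue}
/-- `R_r^+(x) = {v ∈ R^+(x) : v monochromatically dominates x in red}`. -/
def Rrplus (x : V) : Set V := {v ∈ T.Rplus x | T.Dom red v x}
/-- `R_r^-(x) = {v ∈ R^-(x) : x monochromatically dominates v in red}`. -/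
def Rrminus (x : V) : Set V := {v ∈ T.Rminus x | T.Dom red x v}
/-- `B_b^+(x) = {v ∈ B^+(x) : v monochromatically dominates x in blue}`. -/
def Bbplus (x : V) : Set V := {v ∈ T.Bplus x | T.Dom blue v x}
/-- `B_b^-(x) = {v ∈ B^-(x) : x monochromatically dominates v in blue}`. -/
def Bbminus (x : V) : Set V := {v ∈ T.Bminus x | T.Dom blue x v}

end CTournament

namespace AuxShen

open CTournament

universe u

lemma bool_resolve : ∀ a b : Bool, a ≠ b → a = !b := by decide

/-- the third colour -/
def thd (a b : Fin 3) : Fin 3 :=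
  if 0 ≠ a ∧ 0 ≠ b then 0 else if 1 ≠ a ∧ 1 ≠ b then 1 else 2

lemma thd_ne_left : ∀ a b : Fin 3, thd a b ≠ a := by decide
lemma thd_ne_right : ∀ a b : Fin 3, thd a b ≠ b := by decide
lemma eq_thd : ∀ a b c : Fin 3, a ≠ b → c ≠ a → c ≠ b → c = thd a b := by decide
lemma thd_comm : ∀ a b : Fin 3, thd a b = thd b a := by decide
lemma thd_distinct : ∀ a b c : Fin 3, a ≠ b → a ≠ c → b ≠ c →
    thd a b ≠ thd b c ∧ thd b c ≠ thd c a ∧ thd a b ≠ thd c a := by decide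
lemma fin3_cases : ∀ a x y z : Fin 3, y ≠ x → z ≠ x → z ≠ y → (a = x ∨ a = y ∨ a = z) := by decide
lemma fin3_pigeon : ∀ a b c x : Fin 3, a ≠ x → b ≠ x → c ≠ x → (a = b ∨ a = c ∨ b = c) := by decide
lemma fin3_third_unique : ∀ a b x y : Fin 3, a ≠ b → x ≠ a → x ≠ b → y ≠ a → y ≠ b → x = y := by
  decide
lemma fin3_forced : ∀ col mt mu mv : Fin 3, mt ≠ mv → mt ≠ mu → mu ≠ mv →
    col ≠ mt → col ≠ mu → col = mv := by decide
lemma fin3_forced2 : ∀ col mu mv : Fin 3, mu ≠ mv → col ≠ mu → col ≠ thd mv mu → col = mv := by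
  decide
lemma fin3_succ_ne : ∀ a : Fin 3, a + 1 ≠ a := by decide
lemma fin3_class_eq : ∀ col mb my c : Fin 3, col ≠ mb → col ≠ my → col ≠ c → mb ≠ c → my ≠ c →
    mb = my := by decide

variable {V : Type u}

/-- restriction of a tournament to a subset -/
def restrict (T : CTournament V) (S : Set V) : CTournament S where
  beats a b := T.beats a.val b.val
  irrefl v := T.irrefl v
  asymm a b h := T.asymm _ _ h
  total a b h := T.total _ _ (fun hh => h (Subtype.ext hh))
  colour a b := T.colour a.val b.val

lemma dom_of_restrict {T : CTournament V} {S : Set V} {c : Fin 3} {a b : S}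
    (h : (restrict T S).Dom c a b) : T.Dom c a b :=
  Relation.TransGen.lift Subtype.val (fun _ _ hh => hh) _ _ h

lemma mdom_of_restrict {T : CTournament V} {S : Set V} {a b : S}
    (h : (restrict T S).MDom a b) : T.MDom a b := by
  obtain ⟨c, hc⟩ := h; exact ⟨c, dom_of_restrict hc⟩

lemma hasT3_of_restrict {T : CTournament V} {S : Set V}
    (h : (restrict T S).HasT3) : T.HasT3 := by
  obtain ⟨a, b, c, h1, h2, h3, h4, h5, h6⟩ := h
  exact ⟨a, b, c, h1, h2, h3, h4, h5, h6⟩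

lemma hcol_restrict {T : CTournament V} {S : Set V}
    (hcol : ∀ v : V, ∃ c : Fin 3, ¬ T.IncidentColour v c) :
    ∀ v : S, ∃ c : Fin 3, ¬ (restrict T S).IncidentColour v c := by
  intro v
  obtain ⟨c, hc⟩ := hcol v.val
  refine ⟨c, fun hin => hc ?_⟩
  obtain ⟨w, hw⟩ := hin
  exact ⟨w.val, hw⟩

lemma card_set_lt [Finite V] {S : Set V} {x : V} (hx : x ∉ S) : Nat.card S < Nat.card V := by
  have h1 : Nat.card S < Nat.card (Set.univ : Set V) :=
    Set.Finite.card_lt_card Set.finite_univ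
      ⟨Set.subset_univ S, fun hsub => hx (hsub (Set.mem_univ x))⟩
  simpa using h1

end AuxShen

namespace AuxShen
universe u
variable {V : Type u}

/-- Sands–Sauer–Woodrow for an abstract 2-colouring. -/
lemma ssw (n : ℕ) : ∀ {V : Type u} [Finite V] [Nonempty V] (T : CTournament V)
    (κ : V → V → Bool), Nat.card V ≤ n →
    ∃ x : V, ∀ y, y ≠ x → ∃ b : Bool,
      Relation.TransGen (fun a c => T.beats a c ∧ κ a c = b) x y := by
  induction n using Nat.strong_induction_on with
  | _ n IH =>
    intro V _ _ T κ hcard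
    obtain ⟨v0⟩ := ‹Nonempty V›
    by_cases htriv : ∀ y : V, y = v0
    · exact ⟨v0, fun y hy => absurd (htriv y) hy⟩
    push_neg at htriv
    obtain ⟨y1, hy1⟩ := htriv
    have hS0ne : Nonempty ({z | z ≠ v0} : Set V) := ⟨⟨y1, hy1⟩⟩
    have hcard0 : Nat.card ({z | z ≠ v0} : Set V) < Nat.card V :=
      card_set_lt (x := v0) (by simp)
    obtain ⟨⟨u, huv0⟩, hu'⟩ := IH (Nat.card ({z | z ≠ v0} : Set V))
      (lt_of_lt_of_le hcard0 hcard)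
      (restrict T {z | z ≠ v0}) (fun a b => κ a.val b.val) le_rfl
    have huv0 : u ≠ v0 := huv0
    have lift0 : ∀ (a b : ({z | z ≠ v0} : Set V)) (bb : Bool),
        Relation.TransGen (fun p q : ({z | z ≠ v0} : Set V) =>
          (restrict T {z | z ≠ v0}).beats p q ∧ κ p.val q.val = bb) a b →
        Relation.TransGen (fun p q : V => T.beats p q ∧ κ p q = bb) a.val b.val :=
      fun a b bb h => Relation.TransGen.lift Subtype.val (fun _ _ hh => hh) _ _ h
    by_cases hpath : ∃ bb : Bool,
        Relation.TransGen (fun p q : V => T.beats p q ∧ κ p q = bb) u v0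
    · refine ⟨u, fun y hy => ?_⟩
      by_cases hyv : y = v0
      · rw [hyv]; exact hpath
      · obtain ⟨bb, hb⟩ := hu' ⟨y, hyv⟩ (fun hc => hy (congrArg Subtype.val hc))
        exact ⟨bb, lift0 _ _ _ hb⟩
    · have hbv : T.beats v0 u := by
        rcases T.total v0 u (Ne.symm huv0) with h | h
        · exact h
        · exact absurd ⟨κ u v0, Relation.TransGen.single ⟨h, rfl⟩⟩ hpath
      have huS : u ∉ (insert v0 {t | (t ≠ v0 ∧ t ≠ u) ∧
          Relation.TransGen (fun p q : V => T.beats p q ∧ κ p q = !(κ v0 u)) u t} : Set V) := by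
        intro h
        rcases h with h | h
        · exact huv0 h
        · exact h.1.2 rfl
      haveI hSne : Nonempty ((insert v0 {t | (t ≠ v0 ∧ t ≠ u) ∧
          Relation.TransGen (fun p q : V => T.beats p q ∧ κ p q = !(κ v0 u)) u t} : Set V)) :=
        ⟨⟨v0, Or.inl rfl⟩⟩
      obtain ⟨⟨w, hwS⟩, hw'⟩ := IH _ (lt_of_lt_of_le (card_set_lt huS) hcard)
        (restrict T _) (fun a b => κ a.val b.val) le_rfl
      have liftS : ∀ (a b : ((insert v0 {t | (t ≠ v0 ∧ t ≠ u) ∧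
          Relation.TransGen (fun p q : V => T.beats p q ∧ κ p q = !(κ v0 u)) u t} : Set V)))
          (bb : Bool),
          Relation.TransGen (fun p q => (restrict T _).beats p q ∧ κ p.val q.val = bb) a b →
          Relation.TransGen (fun p q : V => T.beats p q ∧ κ p q = bb) a.val b.val :=
        fun a b bb h => Relation.TransGen.lift Subtype.val (fun _ _ hh => hh) _ _ h
      have cov : ∀ y : V, y ≠ v0 → y ≠ u → y ∉ (insert v0 {t | (t ≠ v0 ∧ t ≠ u) ∧
          Relation.TransGen (fun p q : V => T.beats p q ∧ κ p q = !(κ v0 u)) u t} : Set V) →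
          Relation.TransGen (fun p q : V => T.beats p q ∧ κ p q = κ v0 u) u y := by
        intro y h1 h2 h3
        obtain ⟨bb, hb⟩ := hu' ⟨y, h1⟩ (fun hc => h2 (congrArg Subtype.val hc))
        have hb' := lift0 _ _ _ hb
        by_cases hbb : bb = κ v0 u
        · rwa [hbb] at hb'
        · exfalso
          exact h3 (Or.inr ⟨⟨h1, h2⟩, (bool_resolve _ _ hbb) ▸ hb'⟩)
      by_cases hwv0 : w = v0
      · refine ⟨v0, fun y hy => ?_⟩
        by_cases hyu : y = u
        · exact ⟨κ v0 u, by rw [hyu]; exact Relation.TransGen.single ⟨hbv, rfl⟩⟩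
        by_cases hyS : y ∈ (insert v0 {t | (t ≠ v0 ∧ t ≠ u) ∧
            Relation.TransGen (fun p q : V => T.beats p q ∧ κ p q = !(κ v0 u)) u t} : Set V)
        · obtain ⟨bb, hb⟩ := hw' ⟨y, hyS⟩
            (fun hc => hy (by rw [← hwv0]; exact congrArg Subtype.val hc))
          exact ⟨bb, hwv0 ▸ liftS _ _ _ hb⟩
        · exact ⟨κ v0 u, (Relation.TransGen.single ⟨hbv, rfl⟩).trans (cov y hy hyu hyS)⟩
      · have hwX : (w ≠ v0 ∧ w ≠ u) ∧
            Relation.TransGen (fun p q : V => T.beats p q ∧ κ p q = !(κ v0 u)) u w := by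
          rcases hwS with h | h
          · exact absurd h hwv0
          · exact h
        obtain ⟨bb, hb⟩ := hw' ⟨v0, Or.inl rfl⟩
          (fun hc => hwv0 ((congrArg Subtype.val hc).symm))
        obtain ⟨a', hra, hlast⟩ := Relation.TransGen.tail'_iff.mp hb
        have hlast1 : T.beats a'.val v0 := hlast.1
        have hlast2 : κ a'.val v0 = bb := hlast.2
        have hav0 : a'.val ≠ v0 := by
          intro hc
          rw [hc] at hlast1
          exact T.irrefl v0 hlast1
        have haX : (a'.val ≠ v0 ∧ a'.val ≠ u) ∧
            Relation.TransGen (fun p q : V => T.beats p q ∧ κ p q = !(κ v0 u)) u a'.val := by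
          rcases a'.prop with h | h
          · exact absurd h hav0
          · exact h
        have hbbβ : bb = κ v0 u := by
          by_contra hc
          exact hpath ⟨!(κ v0 u), (haX.2).tail ⟨hlast1, (bool_resolve _ _ hc) ▸ hlast2⟩⟩
        have hwv0path : Relation.TransGen
            (fun p q : V => T.beats p q ∧ κ p q = κ v0 u) w v0 := by
          have hlift := liftS _ _ _ hb
          rwa [hbbβ] at hlift
        have hwu : Relation.TransGen (fun p q : V => T.beats p q ∧ κ p q = κ v0 u) w u :=
          hwv0path.tail ⟨hbv, rfl⟩
        refine ⟨w, fun y hy => ?_⟩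
        by_cases h1 : y = v0
        · exact ⟨κ v0 u, h1 ▸ hwv0path⟩
        by_cases h2 : y = u
        · exact ⟨κ v0 u, h2 ▸ hwu⟩
        by_cases h3 : y ∈ (insert v0 {t | (t ≠ v0 ∧ t ≠ u) ∧
            Relation.TransGen (fun p q : V => T.beats p q ∧ κ p q = !(κ v0 u)) u t} : Set V)
        · obtain ⟨bb2, hb2⟩ := hw' ⟨y, h3⟩ (fun hc => hy (congrArg Subtype.val hc))
          exact ⟨bb2, liftS _ _ _ hb2⟩
        · exact ⟨κ v0 u, hwu.trans (cov y h1 h2 h3)⟩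


end AuxShen

namespace AuxShen

universe u

lemma main_aux (n : ℕ) : ∀ {V : Type u} [Finite V] [Nonempty V] (T : CTournament V),
    Nat.card V ≤ n → (∀ v : V, ∃ c : Fin 3, ¬ T.IncidentColour v c) → ¬ T.HasT3 →
    ∃ x : V, ∀ y, y ≠ x → T.MDom x y := by
  induction n using Nat.strong_induction_on with
  | _ n IH =>
    intro V _ _ T hcard hcol hT3
    by_contra hno
    push_neg at hno
    -- hno : ∀ x, ∃ y, y ≠ x ∧ ¬ T.MDom x y
    set m : V → Fin 3 := fun v => (hcol v).choose with hmdef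
    have hm : ∀ v, ¬ T.IncidentColour v (m v) := fun v => (hcol v).choose_spec
    have colour_ne_src : ∀ a b : V, T.beats a b → T.colour a b ≠ m a :=
      fun a b h hc => hm a ⟨b, Or.inl ⟨h, hc⟩⟩
    have colour_ne_tgt : ∀ a b : V, T.beats a b → T.colour a b ≠ m b :=
      fun a b h hc => hm b ⟨a, Or.inr ⟨h, hc⟩⟩
    have cross_col : ∀ a b : V, T.beats a b → m a ≠ m b → T.colour a b = thd (m a) (m b) :=
      fun a b h hne => eq_thd _ _ _ hne (colour_ne_src a b h) (colour_ne_tgt a b h)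
    have dom_first : ∀ (c : Fin 3) (a b : V), T.Dom c a b → c ≠ m a := by
      intro c a b h
      obtain ⟨p, hp, -⟩ := Relation.TransGen.head'_iff.mp h
      exact hp.2 ▸ colour_ne_src a p hp.1
    have dom_last : ∀ (c : Fin 3) (a b : V), T.Dom c a b → c ≠ m b := by
      intro c a b h
      obtain ⟨p, -, hp⟩ := Relation.TransGen.tail'_iff.mp h
      exact hp.2 ▸ colour_ne_tgt p b hp.1
    have cross_dom : ∀ a b : V, T.MDom a b → m a ≠ m b → T.Dom (thd (m a) (m b)) a b := by
      intro a b hmd hne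
      obtain ⟨c, hc⟩ := hmd
      rwa [eq_thd (m a) (m b) c hne (dom_first c a b hc) (dom_last c a b hc)] at hc
    by_cases hsurj : ∀ c : Fin 3, ∃ v, m v = c
    · -- all three classes appear
      have hnontriv : Nontrivial V := by
        obtain ⟨a0, ha0⟩ := hsurj 0
        obtain ⟨a1, ha1⟩ := hsurj 1
        exact ⟨⟨a0, a1, fun hc => by rw [hc, ha1] at ha0; exact absurd ha0 (by decide)⟩⟩
      -- every proper nonempty subset has an (MDom-)dominating vertex
      have subdom : ∀ S : Set V, S.Nonempty → S ≠ Set.univ →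
          ∃ x ∈ S, ∀ y ∈ S, y ≠ x → T.MDom x y := by
        intro S hne hSu
        obtain ⟨s0, hs0⟩ := hne
        haveI : Nonempty S := ⟨⟨s0, hs0⟩⟩
        have hex : ∃ t, t ∉ S := by
          by_contra hc
          push_neg at hc
          exact hSu (Set.eq_univ_of_forall hc)
        obtain ⟨t, ht⟩ := hex
        obtain ⟨x', hx'⟩ := IH (Nat.card S) (lt_of_lt_of_le (card_set_lt ht) hcard)
          (restrict T S) le_rfl (hcol_restrict hcol) (fun hsub => hT3 (hasT3_of_restrict hsub))
        refine ⟨x'.val, x'.prop, fun y hyS hyne => ?_⟩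
        exact mdom_of_restrict (hx' ⟨y, hyS⟩ (fun hc => hyne (congrArg Subtype.val hc)))
      -- almost-dominating vertex construction
      have wspec : ∀ y : V, ∃ ww : V, ww ≠ y ∧ (∀ z, z ≠ y → z ≠ ww → T.MDom ww z) ∧
          ¬ T.MDom ww y ∧ T.beats y ww := by
        intro y
        obtain ⟨z0, hz0⟩ := exists_ne y
        obtain ⟨x, hxS, hx⟩ := subdom {z | z ≠ y} ⟨z0, hz0⟩
          (by
            intro hc
            have : y ∈ ({z | z ≠ y} : Set V) := by rw [hc]; trivial
            exact this rfl)
        have hxy : x ≠ y := hxS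
        have hnmd : ¬ T.MDom x y := by
          intro hMD
          obtain ⟨t, ht, htn⟩ := hno x
          by_cases hty : t = y
          · exact htn (hty ▸ hMD)
          · exact htn (hx t hty ht)
        have hbeats : T.beats y x := by
          rcases T.total y x (Ne.symm hxy) with h | h
          · exact h
          · exact absurd ⟨T.colour x y, Relation.TransGen.single ⟨h, rfl⟩⟩ hnmd
        exact ⟨x, hxy, fun z h1 h2 => hx z h1 h2, hnmd, hbeats⟩
      choose w hw1 hw2 hw3 hw4 using wspec
      have winj : Function.Injective w := by
        intro y1 y2 he
        by_contra hne
        have h1 : y2 ≠ w y1 := by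
          rw [he]
          exact fun hc => (hw1 y2) hc.symm
        have h2 : T.MDom (w y1) y2 := hw2 y1 y2 (fun hc => hne hc.symm) h1
        rw [he] at h2
        exact hw3 y2 h2
      let σ : Equiv.Perm V := Equiv.ofBijective w (Finite.injective_iff_bijective.mp winj)
      have hσ : ∀ y, σ y = w y := fun y => rfl
      have H1 : ∀ y, T.beats y (σ y) := hw4
      have hwsymm : ∀ x : V, w (σ.symm x) = x := fun x => by
        rw [← hσ, Equiv.apply_symm_apply]
      have H1' : ∀ x, T.beats (σ.symm x) x := fun x => by
        have := hw4 (σ.symm x)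
        rwa [hwsymm] at this
      have H2 : ∀ x z : V, z ≠ σ.symm x → z ≠ x → T.MDom x z := by
        intro x z h1 h2
        have := hw2 (σ.symm x) z h1 (by rw [hwsymm]; exact h2)
        rwa [hwsymm] at this
      have H3 : ∀ x : V, ¬ T.MDom x (σ.symm x) := by
        intro x
        have := hw3 (σ.symm x)
        rwa [hwsymm] at this
      have hnofix : ∀ t : V, σ t ≠ t := by
        intro t hc
        have := H1 t
        rw [hc] at this
        exact T.irrefl t this
      have symm_iter : ∀ (k : ℕ) (x : V), (⇑σ.symm)^[k] ((⇑σ)^[k] x) = x := by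
        intro k
        induction k with
        | zero => intro x; rfl
        | succ k IHk =>
          intro x
          rw [Function.iterate_succ_apply' σ, Function.iterate_succ_apply σ.symm,
            Equiv.symm_apply_apply]
          exact IHk x
      have orbit : ∀ v z : V, ∃ k, (⇑σ)^[k] v = z := by
        intro v z
        by_contra hz
        push_neg at hz
        have key : ∀ i j : ℕ, i < j → (⇑σ)^[j] v = (⇑σ)^[i] v →
            ∃ p, 0 < p ∧ (⇑σ)^[p] v = v := by
          intro i j hij heq
          refine ⟨j - i, Nat.sub_pos_of_lt hij, ?_⟩
          have hj : i + (j - i) = j := Nat.add_sub_cancel' (le_of_lt hij)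
          have h2 : (⇑σ)^[i] ((⇑σ)^[j - i] v) = (⇑σ)^[i] v := by
            rw [← Function.iterate_add_apply, hj, heq]
          exact (σ.injective.iterate i) h2
        have hper : ∃ p, 0 < p ∧ (⇑σ)^[p] v = v := by
          obtain ⟨i, j, hij, heq⟩ := Finite.exists_ne_map_eq_of_infinite (fun k : ℕ => (⇑σ)^[k] v)
          rcases lt_or_gt_of_ne hij with h | h
          · exact key i j h heq.symm
          · exact key j i h heq
        obtain ⟨p, hp, hpv⟩ := hper
        have hzS : z ∉ ({t | ∃ k, (⇑σ)^[k] v = t} : Set V) := fun ⟨k, hk⟩ => hz k hk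
        obtain ⟨d, hdS, hd⟩ := subdom {t | ∃ k, (⇑σ)^[k] v = t} ⟨v, 0, rfl⟩
          (by
            intro hc
            apply hzS
            rw [hc]
            trivial)
        obtain ⟨kd, hkd⟩ := hdS
        have hsymmS : σ.symm d ∈ ({t | ∃ k, (⇑σ)^[k] v = t} : Set V) := by
          refine ⟨kd + (p - 1), ?_⟩
          have h1 : (⇑σ)^[kd + (p - 1) + 1] v = d := by
            have he : kd + (p - 1) + 1 = kd + p := by omega
            rw [he, Function.iterate_add_apply, hpv, hkd]
          have h2 := congrArg σ.symm h1
          rwa [Function.iterate_succ_apply' σ, Equiv.symm_apply_apply] at h2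
        have hdd : σ.symm d ≠ d := by
          intro hc
          have := H1' d
          rw [hc] at this
          exact T.irrefl d this
        exact H3 d (hd (σ.symm d) hsymmS hdd)
      -- Claim 1: the predecessor of a vertex is always in a different colour class
      have core1 : ∀ v : V, m (σ.symm v) = m v → ∀ b, m b ≠ m v → T.beats (σ.symm v) b := by
        intro v hmv b hb
        have hbv : b ≠ v := fun hc => hb (by rw [hc])
        have hbu : b ≠ σ.symm v := fun hc => hb (by rw [hc, hmv])
        have hmd : T.MDom v b := H2 v b hbu hbv
        have hdom : T.Dom (thd (m v) (m b)) v b := cross_dom v b hmd (Ne.symm hb)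
        rcases T.total (σ.symm v) b (Ne.symm hbu) with h | h
        · exact h
        · exfalso
          have hcb : T.colour b (σ.symm v) = thd (m b) (m (σ.symm v)) :=
            cross_col b (σ.symm v) h (by rw [hmv]; exact hb)
          have hfin : T.Dom (thd (m v) (m b)) v (σ.symm v) :=
            hdom.tail ⟨h, by rw [hcb, hmv, thd_comm]⟩
          exact H3 v ⟨_, hfin⟩
      have step1 : ∀ v : V, m (σ.symm v) = m v → m (σ.symm (σ.symm v)) = m (σ.symm v) := by
        intro v h
        by_contra hne
        have hb := core1 v h (σ.symm (σ.symm v)) (fun hc => hne (hc.trans h.symm))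
        exact H3 (σ.symm v) ⟨_, Relation.TransGen.single ⟨hb, rfl⟩⟩
      have claim1 : ∀ v : V, m (σ.symm v) ≠ m v := by
        intro v hv
        have hstep : ∀ k : ℕ, m ((⇑σ.symm)^[k + 1] v) = m ((⇑σ.symm)^[k] v) := by
          intro k
          induction k with
          | zero => simpa using hv
          | succ k IHk =>
            have e1 : (⇑σ.symm)^[k + 1] v = σ.symm ((⇑σ.symm)^[k] v) :=
              Function.iterate_succ_apply' σ.symm k v
            have e2 : (⇑σ.symm)^[k + 2] v = σ.symm (σ.symm ((⇑σ.symm)^[k] v)) := by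
              rw [Function.iterate_succ_apply' σ.symm (k + 1) v, e1]
            rw [e1] at IHk
            rw [e1, e2]
            exact step1 _ IHk
        have hall : ∀ k : ℕ, m ((⇑σ.symm)^[k] v) = m v := by
          intro k
          induction k with
          | zero => rfl
          | succ k IHk => rw [hstep k]; exact IHk
        obtain ⟨z, hzz⟩ := hsurj (m v + 1)
        obtain ⟨k, hk⟩ := orbit z v
        have hzv : z = (⇑σ.symm)^[k] v := by rw [← hk, symm_iter]
        rw [hzv, hall k] at hzz
        exact fin3_succ_ne (m v) hzz.symm
      have claim1' : ∀ v : V, m (σ v) ≠ m v := by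
        intro v hc
        have h := claim1 (σ v)
        rw [Equiv.symm_apply_apply] at h
        exact h hc.symm
      -- Claim 2 (core): from two vertices in a class, a vertex of that class
      -- beating the whole class of the predecessor
      have core2 : ∀ v wv : V, wv ≠ v → m wv = m v →
          ∃ z, m z = m v ∧ ∀ b, m b = m (σ.symm v) → T.beats z b := by
        intro v wv hwv hmwv
        have hmu : m (σ.symm v) ≠ m v := claim1 v
        have hin : ∀ t, T.beats t (σ.symm v) → m t ≠ m v → T.colour t (σ.symm v) = m v := by
          intro t ht hmt
          have h1 : T.colour t (σ.symm v) ≠ m t := colour_ne_src _ _ ht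
          have h2 : T.colour t (σ.symm v) ≠ m (σ.symm v) := colour_ne_tgt _ _ ht
          by_cases hcase : m t = m (σ.symm v)
          · have h3 : T.colour t (σ.symm v) ≠ thd (m v) (m (σ.symm v)) := by
              intro hc
              have htv : t ≠ v := fun hc2 => hmt (by rw [hc2])
              have htu : t ≠ σ.symm v := fun hc2 => T.irrefl _ (by rw [hc2] at ht; exact ht)
              have hmd := H2 v t htu htv
              have hdom := cross_dom v t hmd (Ne.symm hmt)
              have hfin : T.Dom (thd (m v) (m t)) v (σ.symm v) :=
                hdom.tail ⟨ht, by rw [hc, hcase]⟩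
              exact H3 v ⟨_, hfin⟩
            exact fin3_forced2 _ _ _ hmu h2 h3
          · exact fin3_forced _ _ _ _ hmt hcase hmu h1 h2
        have hz : ∃ z, m z = m v ∧ T.beats z (σ.symm v) := by
          by_contra hc
          push_neg at hc
          have hwu_ne : σ.symm v ≠ wv := fun hc2 => hmu (by rw [hc2]; exact hmwv)
          have hwu_ne2 : σ.symm v ≠ σ.symm wv :=
            fun hc2 => hwv (σ.symm.injective hc2).symm
          have hmd : T.MDom wv (σ.symm v) := H2 wv (σ.symm v) hwu_ne2 hwu_ne
          obtain ⟨c, hcdom⟩ := hmd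
          have hc1 : c ≠ m wv := dom_first _ _ _ hcdom
          obtain ⟨a, -, hlast⟩ := Relation.TransGen.tail'_iff.mp hcdom
          by_cases hma : m a = m v
          · exact hc a hma hlast.1
          · have hcol' := hin a hlast.1 hma
            rw [hlast.2] at hcol'
            exact hc1 (by rw [hcol', hmwv])
        obtain ⟨z, hz1, hz2⟩ := hz
        refine ⟨z, hz1, fun b hb => ?_⟩
        by_cases hbu : b = σ.symm v
        · rw [hbu]; exact hz2
        have hzb : z ≠ b := by
          intro hc
          rw [← hc] at hb
          rw [hz1] at hb
          exact hmu hb.symm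
        rcases T.total z b hzb with h | h
        · exact h
        · exfalso
          have hbv2 : b ≠ v := fun hc => hmu (by rw [← hb, hc])
          have hmd := H2 v b hbu hbv2
          have hdom := cross_dom v b hmd (by rw [hb]; exact Ne.symm hmu)
          have hc1 : T.colour b z = thd (m b) (m z) :=
            cross_col b z h (by rw [hb, hz1]; exact hmu)
          have hstep1 : T.Dom (thd (m v) (m b)) v z :=
            hdom.tail ⟨h, by rw [hc1, hz1, thd_comm]⟩
          have hc2 : T.colour z (σ.symm v) = thd (m z) (m (σ.symm v)) :=
            cross_col z (σ.symm v) hz2 (by rw [hz1]; exact Ne.symm hmu)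
          have hstep2 : T.Dom (thd (m v) (m b)) v (σ.symm v) :=
            hstep1.tail ⟨hz2, by rw [hc2, hz1, hb]⟩
          exact H3 v ⟨_, hstep2⟩
      -- Claim 2: a class with two vertices beats every other class (via some member)
      have bigclass : ∀ v wv : V, wv ≠ v → m wv = m v → ∀ c, c ≠ m v →
          ∃ z, m z = m v ∧ ∀ b, m b = c → T.beats z b := by
        intro v wv hwv hmwv c hcne
        by_cases hcu : c = m (σ.symm v)
        · obtain ⟨z, h1, h2⟩ := core2 v wv hwv hmwv
          exact ⟨z, h1, fun b hb => h2 b (by rw [← hcu]; exact hb)⟩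
        · obtain ⟨z1, hz1m, hz1⟩ := core2 v wv hwv hmwv
          have hz1u : T.beats z1 (σ.symm v) := hz1 _ rfl
          have hne1 : m (σ.symm z1) ≠ m (σ.symm v) := by
            intro hc
            exact H3 z1 ⟨_, Relation.TransGen.single ⟨hz1 (σ.symm z1) hc, rfl⟩⟩
          have hne2 : m (σ.symm z1) ≠ m z1 := claim1 z1
          have hmc : m (σ.symm z1) = c := by
            refine fin3_third_unique (m v) (m (σ.symm v)) _ _ (Ne.symm (claim1 v))
              (by rw [← hz1m]; exact hne2) hne1 hcne hcu
          have hvz1 : v ≠ z1 := by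
            intro hc
            rw [← hc] at hz1u
            exact T.asymm _ _ hz1u (H1' v)
          obtain ⟨z, hzm, hzb⟩ := core2 z1 v hvz1 (by rw [hz1m])
          exact ⟨z, by rw [hzm, hz1m], fun b hb => hzb b (by rw [hmc]; exact hb)⟩
      -- at most one class contains two vertices
      have no_two_big : ∀ v1 w1 v2 w2 : V, w1 ≠ v1 → m w1 = m v1 → w2 ≠ v2 → m w2 = m v2 →
          m v1 ≠ m v2 → False := by
        intro v1 w1 v2 w2 h1 h2 h3 h4 h5
        obtain ⟨z1, hz1m, hz1⟩ := bigclass v1 w1 h1 h2 (m v2) (Ne.symm h5)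
        obtain ⟨z2, hz2m, hz2⟩ := bigclass v2 w2 h3 h4 (m v1) h5
        exact T.asymm _ _ (hz1 z2 hz2m) (hz2 z1 hz1m)
      by_cases hbig : ∃ v wv : V, wv ≠ v ∧ m wv = m v
      · -- sizes (2,1,1): four vertices
        obtain ⟨v, wv, hwv, hmwv⟩ := hbig
        have hsing : ∀ b1 b2 : V, m b1 ≠ m v → m b2 = m b1 → b2 = b1 := by
          intro b1 b2 hb1 hb2
          by_contra hne
          exact no_two_big b1 b2 v wv hne hb2 hwv hmwv hb1
        have hX2 : ∀ x3 : V, m x3 = m v → x3 = v ∨ x3 = wv := by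
          intro x3 h3
          by_contra hc
          push_neg at hc
          obtain ⟨hc1, hc2⟩ := hc
          have e1 : m (σ v) ≠ m v := claim1' v
          have e2 : m (σ wv) ≠ m v := by rw [← hmwv]; exact claim1' wv
          have e3 : m (σ x3) ≠ m v := by rw [← h3]; exact claim1' x3
          rcases fin3_pigeon (m (σ v)) (m (σ wv)) (m (σ x3)) (m v) e1 e2 e3 with h | h | h
          · exact hwv (σ.injective (hsing (σ v) (σ wv) e1 h.symm))
          · exact hc1 (σ.injective (hsing (σ v) (σ x3) e1 h.symm))
          · exact hc2 (σ.injective (hsing (σ wv) (σ x3) e2 h.symm))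
        set y : V := σ v with hydef
        have hmy : m y ≠ m v := claim1' v
        obtain ⟨z, hmz⟩ := hsurj (thd (m v) (m y))
        have hzv : m z ≠ m v := by rw [hmz]; exact thd_ne_left _ _
        have hzy : m z ≠ m y := by rw [hmz]; exact thd_ne_right _ _
        have hcov : ∀ t : V, t = v ∨ t = wv ∨ t = y ∨ t = z := by
          intro t
          rcases fin3_cases (m t) (m v) (m y) (m z) hmy hzv hzy with h | h | h
          · rcases hX2 t h with h' | h'
            · exact Or.inl h'
            · exact Or.inr (Or.inl h')
          · exact Or.inr (Or.inr (Or.inl (hsing y t hmy h)))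
          · exact Or.inr (Or.inr (Or.inr (hsing z t hzv h)))
        have hyv : y ≠ v := fun hc => hmy (by rw [hc])
        have hyw : y ≠ wv := fun hc => hmy (by rw [hc, hmwv])
        have hzv' : z ≠ v := fun hc => hzv (by rw [hc])
        have hzw : z ≠ wv := fun hc => hzv (by rw [hc, hmwv])
        have hzy' : z ≠ y := fun hc => hzy (by rw [hc])
        have hσy : σ y = wv ∨ σ y = z := by
          rcases hcov (σ y) with h | h | h | h
          · exfalso
            have horb : ∀ k : ℕ, (⇑σ)^[k] v = v ∨ (⇑σ)^[k] v = y := by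
              intro k
              induction k with
              | zero => exact Or.inl rfl
              | succ k IHk =>
                rw [Function.iterate_succ_apply']
                rcases IHk with h' | h'
                · rw [h']; exact Or.inr hydef.symm
                · rw [h', h]; exact Or.inl rfl
            obtain ⟨k, hk⟩ := orbit v z
            rcases horb k with h' | h' <;> rw [hk] at h'
            · exact hzv' h'
            · exact hzy' h'
          · exact Or.inl h
          · exact absurd h (hnofix y)
          · exact Or.inr h
        rcases hσy with hσy | hσy
        · have hσw : σ wv = z := by
            have h2 : m (σ wv) ≠ m v := by rw [← hmwv]; exact claim1' wv
            rcases hcov (σ wv) with h | h | h | h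
            · exact absurd (by rw [h]) h2
            · exact absurd h (hnofix wv)
            · exact absurd (σ.injective (by rw [h, hydef])) hwv
            · exact h
          have hσz : σ z = v := by
            rcases hcov (σ z) with h | h | h | h
            · exact h
            · exact absurd (σ.injective (by rw [h, ← hσy])) hzy'
            · exact absurd (σ.injective (by rw [h, hydef])) hzv'
            · exact absurd h (hnofix z)
          have hb1 : T.beats v y := H1 v
          have hb2 : T.beats y wv := by have := H1 y; rwa [hσy] at this
          have hb3 : T.beats wv z := by have := H1 wv; rwa [hσw] at this
          have hb4 : T.beats z v := by have := H1 z; rwa [hσz] at this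
          have hc1 : T.colour v y = thd (m v) (m y) := cross_col _ _ hb1 (Ne.symm hmy)
          have hc2 : T.colour y wv = thd (m y) (m v) := by
            have := cross_col _ _ hb2 (by rw [hmwv]; exact hmy)
            rwa [hmwv] at this
          have hc3 : T.colour wv z = thd (m v) (m z) := by
            have := cross_col _ _ hb3 (by rw [hmwv]; exact Ne.symm hzv)
            rwa [hmwv] at this
          have hc4 : T.colour z v = thd (m z) (m v) := cross_col _ _ hb4 hzv
          rcases T.total y z (Ne.symm hzy') with h | h
          · obtain ⟨d1, d2, d3⟩ :=
              thd_distinct (m v) (m y) (m z) (Ne.symm hmy) (Ne.symm hzv) (Ne.symm hzy)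
            have hcyz : T.colour y z = thd (m y) (m z) := cross_col _ _ h (Ne.symm hzy)
            exact hT3 ⟨v, y, z, hb1, h, hb4,
              by rw [hc1, hcyz]; exact d1,
              by rw [hcyz, hc4]; exact d2,
              by rw [hc1, hc4]; exact d3⟩
          · obtain ⟨d1, d2, d3⟩ :=
              thd_distinct (m y) (m v) (m z) hmy (Ne.symm hzy) (Ne.symm hzv)
            have hczy : T.colour z y = thd (m z) (m y) := cross_col _ _ h hzy
            exact hT3 ⟨y, wv, z, hb2, hb3, h,
              by rw [hc2, hc3]; exact d1,
              by rw [hc3, hczy]; exact d2,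
              by rw [hc2, hczy]; exact d3⟩
        · have hA : σ z = v ∨ σ z = wv := by
            rcases hcov (σ z) with h | h | h | h
            · exact Or.inl h
            · exact Or.inr h
            · exact absurd (σ.injective (by rw [h, hydef])) hzv'
            · exact absurd h (hnofix z)
          rcases hA with h | h
          · have horb : ∀ k : ℕ, (⇑σ)^[k] v = v ∨ (⇑σ)^[k] v = y ∨ (⇑σ)^[k] v = z := by
              intro k
              induction k with
              | zero => exact Or.inl rfl
              | succ k IHk =>
                rw [Function.iterate_succ_apply']
                rcases IHk with h' | h' | h'
                · rw [h']; exact Or.inr (Or.inl hydef.symm)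
                · rw [h', hσy]; exact Or.inr (Or.inr rfl)
                · rw [h', h]; exact Or.inl rfl
            obtain ⟨k, hk⟩ := orbit v wv
            rcases horb k with h' | h' | h' <;> rw [hk] at h'
            · exact hwv h'
            · exact hyw h'.symm
            · exact hzw h'.symm
          · have hcw := claim1' wv
            rcases hcov (σ wv) with h' | h' | h' | h'
            · exact hcw (by rw [h', ← hmwv])
            · exact absurd h' (hnofix wv)
            · exact hwv (σ.injective (by rw [h', hydef]))
            · exact hyw (σ.injective (by rw [h', ← hσy])).symm
      · -- sizes (1,1,1): three vertices
        push_neg at hbig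
        have hminj : ∀ a b : V, m a = m b → a = b := by
          intro a b hab
          by_contra hc
          exact hbig b a hc hab
        obtain ⟨x, hx⟩ := hsurj 0
        obtain ⟨y, hy⟩ := hsurj 1
        obtain ⟨z, hz⟩ := hsurj 2
        have hcov : ∀ t : V, t = x ∨ t = y ∨ t = z := by
          intro t
          rcases fin3_cases (m t) 0 1 2 (by decide) (by decide) (by decide) with h | h | h
          · exact Or.inl (hminj t x (by rw [h, hx]))
          · exact Or.inr (Or.inl (hminj t y (by rw [h, hy])))
          · exact Or.inr (Or.inr (hminj t z (by rw [h, hz])))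
        have hmxy : m x ≠ m y := by rw [hx, hy]; decide
        have hmxz : m x ≠ m z := by rw [hx, hz]; decide
        have hmyz : m y ≠ m z := by rw [hy, hz]; decide
        have hxy : x ≠ y := fun hc => hmxy (by rw [hc])
        have hxz : x ≠ z := fun hc => hmxz (by rw [hc])
        have hyz : y ≠ z := fun hc => hmyz (by rw [hc])
        have hdominate : ∀ a b c : V, (∀ t : V, t = a ∨ t = b ∨ t = c) →
            T.beats a b → T.beats a c → False := by
          intro a b c hcv hab hac
          obtain ⟨t, ht, htn⟩ := hno a
          rcases hcv t with h | h | h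
          · exact ht h
          · subst h; exact htn ⟨_, Relation.TransGen.single ⟨hab, rfl⟩⟩
          · subst h; exact htn ⟨_, Relation.TransGen.single ⟨hac, rfl⟩⟩
        have ht3 : ∀ a b c : V, m a ≠ m b → m a ≠ m c → m b ≠ m c →
            T.beats a b → T.beats b c → T.beats c a → False := by
          intro a b c h1 h2 h3 hab hbc hca
          obtain ⟨d1, d2, d3⟩ := thd_distinct (m a) (m b) (m c) h1 h2 h3
          exact hT3 ⟨a, b, c, hab, hbc, hca,
            by rw [cross_col a b hab h1, cross_col b c hbc h3]; exact d1,
            by rw [cross_col b c hbc h3, cross_col c a hca (Ne.symm h2)]; exact d2,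
            by rw [cross_col a b hab h1, cross_col c a hca (Ne.symm h2)]; exact d3⟩
        have covxyz : ∀ t : V, t = y ∨ t = x ∨ t = z := by
          intro t; rcases hcov t with h | h | h
          · exact Or.inr (Or.inl h)
          · exact Or.inl h
          · exact Or.inr (Or.inr h)
        have covzxy : ∀ t : V, t = z ∨ t = x ∨ t = y := by
          intro t; rcases hcov t with h | h | h
          · exact Or.inr (Or.inl h)
          · exact Or.inr (Or.inr h)
          · exact Or.inl h
        rcases T.total x y hxy with h1 | h1 <;> rcases T.total y z hyz with h2 | h2 <;>
          rcases T.total x z hxz with h3 | h3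
        · exact hdominate x y z hcov h1 h3
        · exact ht3 x y z hmxy hmxz hmyz h1 h2 h3
        · exact hdominate x y z hcov h1 h3
        · exact hdominate z x y covzxy h3 h2
        · exact hdominate y x z covxyz h1 h2
        · exact hdominate y x z covxyz h1 h2
        · exact ht3 x z y hmxz hmxy (Ne.symm hmyz) h3 h2 h1
        · exact hdominate z x y covzxy h3 h2

    · -- at most two classes: Sands–Sauer–Woodrow
      push_neg at hsurj
      obtain ⟨c0, hc0⟩ := hsurj
      obtain ⟨x, hx⟩ := ssw n T (fun a b => decide (T.colour a b = c0)) hcard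
      obtain ⟨t, ht, htn⟩ := hno x
      obtain ⟨b, hpath⟩ := hx t ht
      apply htn
      cases b with
      | true =>
        exact ⟨c0, Relation.TransGen.mono
          (fun a b hab => ⟨hab.1, of_decide_eq_true hab.2⟩) _ _ hpath⟩
      | false =>
        have key : ∀ (p q : V),
            Relation.TransGen
              (fun a c => T.beats a c ∧ (decide (T.colour a c = c0)) = false) p q →
            m q = m p ∧ T.Dom (thd (m p) c0) p q := by
          intro p q h
          induction h with
          | single h' =>
            rename_i b'
            have hnc : T.colour p b' ≠ c0 := of_decide_eq_false h'.2
            have h1 := colour_ne_src p b' h'.1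
            have h2 := colour_ne_tgt p b' h'.1
            refine ⟨(fin3_class_eq (T.colour p b') (m p) (m b') c0 h1 h2 hnc (hc0 p)
              (hc0 b')).symm, ?_⟩
            exact Relation.TransGen.single ⟨h'.1, eq_thd (m p) c0 _ (hc0 p) h1 hnc⟩
          | tail hab h' IHk =>
            rename_i b' q'
            obtain ⟨IH1, IH2⟩ := IHk
            have hnc : T.colour b' q' ≠ c0 := of_decide_eq_false h'.2
            have h1 := colour_ne_src b' q' h'.1
            have h2 := colour_ne_tgt b' q' h'.1
            have hcls := fin3_class_eq (T.colour b' q') (m b') (m q') c0 h1 h2 hnc (hc0 b')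
              (hc0 q')
            constructor
            · rw [← hcls]; exact IH1
            · refine IH2.tail ⟨h'.1, ?_⟩
              rw [← IH1]
              exact eq_thd (m b') c0 _ (hc0 b') h1 hnc
        exact ⟨thd (m x) c0, (key x t hpath).2⟩

end AuxShen

/-- Every finite 3-coloured tournament in which each vertex is
incident with edges of at most two of the three colours contains either a `T_3`
or a vertex that monochromatically dominates every other vertex. -/
theorem t3_or_dominating_vertex {V : Type*} [Fintype V] [Nonempty V]
    (T : CTournament V)
    (hcol : ∀ v : V, ∃ c : Fin 3, ¬ T.IncidentColour v c) :
    T.HasT3 ∨ ∃ x : V, ∀ y, y ≠ x → T.MDom x y := by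
  by_cases h : T.HasT3
  · exact Or.inl h
  · exact Or.inr (AuxShen.main_aux (Nat.card V) T le_rfl hcol h)
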